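/- For t ≥ 2, the colon ideal (J : x_2^{t−1} x_3^t ⋯ x_n^t) equals ⟨x_1, x_2⟩, where J = ⟨x^a : a ∈ Δ_{n,t}⟩; hence ⟨x_1,x_2⟩ is an associated prime of R/J, and therefore ⟨x_1,x_2,x_3⟩ is an embedded prime of J. -/

import Mathlib

open MvPolynomial Finset

/-- The set `Δ_{n,t}`. -/
def Delta (n t : ℕ) : Set (Fin n → ℕ) :=
  {a | (∀ i, 1 ≤ a i ∧ a i ≤ t) ∧ ∑ i, a i = t * (n - 1)} ∪
  {a | ∃ i : Fin n, a = fun j => if j = i then 0 else t}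

lemma aux_prod_monomial_one {k : Type*} [Field k] {n : ℕ} {ι : Type*} (s : Finset ι)
    (f : ι → (Fin n →₀ ℕ)) :
    ∏ i ∈ s, (monomial (f i) (1 : k)) = monomial (∑ i ∈ s, f i) 1 := by
  classical
  induction s using Finset.induction_on with
  | empty => simp
  | insert _ _ h ih =>
      rw [Finset.prod_insert h, Finset.sum_insert h, ih, monomial_mul, one_mul]

lemma aux_prod_pow_eq_monomial {k : Type*} [Field k] {n : ℕ} (a : Fin n → ℕ) :
    ∏ i, (X i : MvPolynomial (Fin n) k) ^ a i =
      monomial (Finsupp.equivFunOnFinite.symm a) 1 := by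
  simp_rw [X_pow_eq_monomial]
  rw [aux_prod_monomial_one]
  have h : (∑ i, Finsupp.single i (a i)) = Finsupp.equivFunOnFinite.symm a := by
    ext j
    simp [Finsupp.single_apply, Finset.sum_ite_eq, Finset.sum_ite_eq']
  rw [h]

lemma aux_gens_eq {k : Type*} [Field k] {n t : ℕ} :
    {m : MvPolynomial (Fin n) k | ∃ a ∈ Delta n t, m = ∏ i, (X i : MvPolynomial (Fin n) k) ^ a i}
      = (fun s => monomial s (1 : k)) '' {s : Fin n →₀ ℕ | ⇑s ∈ Delta n t} := by
  ext m
  constructor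
  · rintro ⟨a, ha, rfl⟩
    exact ⟨Finsupp.equivFunOnFinite.symm a, by simpa using ha,
      (aux_prod_pow_eq_monomial a).symm⟩
  · rintro ⟨s, hs, rfl⟩
    refine ⟨⇑s, hs, ?_⟩
    rw [aux_prod_pow_eq_monomial]
    congr 1
    exact (Finsupp.equivFunOnFinite.symm_apply_apply s).symm

/-- For `t ≥ 2`, `(J : x_2^{t−1} x_3^t ⋯ x_n^t) = ⟨x_1,x_2⟩`, where
`J = ⟨x^a : a ∈ Δ_{n,t}⟩`; hence `⟨x_1,x_2⟩` is an associated prime of `R/J`,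
and — combined with the fact that `⟨x_1,x_2,x_3⟩ ∈ Ass(R/J)` — the prime
`⟨x_1,x_2,x_3⟩` is an embedded prime of `J` (an associated prime strictly
containing another associated prime).  Indices are `0`-based. -/
theorem stmt_7 (k : Type*) [Field k] (n t : ℕ) (hn : 3 ≤ n) (ht : 2 ≤ t)
    (hP3 : IsAssociatedPrime
      (Ideal.span {X (⟨0, by omega⟩ : Fin n), X ⟨1, by omega⟩,
        (X (⟨2, by omega⟩ : Fin n) : MvPolynomial (Fin n) k)})
      (MvPolynomial (Fin n) k ⧸ Ideal.span {m | ∃ a ∈ Delta n t,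
        m = ∏ i, (X i : MvPolynomial (Fin n) k) ^ a i})) :
    (Ideal.span {m | ∃ a ∈ Delta n t,
        m = ∏ i, (X i : MvPolynomial (Fin n) k) ^ a i}).colon
      (Ideal.span {X (⟨1, by omega⟩ : Fin n) ^ (t - 1) *
        ∏ j ∈ Finset.univ.filter (fun j : Fin n => 2 ≤ (j : ℕ)),
          (X j : MvPolynomial (Fin n) k) ^ t})
      = Ideal.span {X (⟨0, by omega⟩ : Fin n),
          (X (⟨1, by omega⟩ : Fin n) : MvPolynomial (Fin n) k)} ∧
    IsAssociatedPrime
      (Ideal.span {X (⟨0, by omega⟩ : Fin n),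
        (X (⟨1, by omega⟩ : Fin n) : MvPolynomial (Fin n) k)})
      (MvPolynomial (Fin n) k ⧸ Ideal.span {m | ∃ a ∈ Delta n t,
        m = ∏ i, (X i : MvPolynomial (Fin n) k) ^ a i}) ∧
    (∃ Q : Ideal (MvPolynomial (Fin n) k),
      IsAssociatedPrime Q
        (MvPolynomial (Fin n) k ⧸ Ideal.span {m | ∃ a ∈ Delta n t,
          m = ∏ i, (X i : MvPolynomial (Fin n) k) ^ a i}) ∧
      Q < Ideal.span {X (⟨0, by omega⟩ : Fin n), X ⟨1, by omega⟩,
        (X (⟨2, by omega⟩ : Fin n) : MvPolynomial (Fin n) k)}) := by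
  clear hP3
  have h0 : (0 : ℕ) < n := by omega
  have h1 : (1 : ℕ) < n := by omega
  have h2 : (2 : ℕ) < n := by omega
  set J : Ideal (MvPolynomial (Fin n) k) := Ideal.span {m | ∃ a ∈ Delta n t,
      m = ∏ i, (X i : MvPolynomial (Fin n) k) ^ a i} with hJdef
  set c : Fin n →₀ ℕ := Finsupp.equivFunOnFinite.symm
      (fun i : Fin n => if (i : ℕ) = 0 then 0 else if (i : ℕ) = 1 then t - 1 else t) with hcdef
  have hcapp : ∀ j : Fin n, c j = if (j : ℕ) = 0 then 0 else if (j : ℕ) = 1 then t - 1 else t := by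
    intro j; rw [hcdef]; simp
  have hXmon : ∀ i : Fin n, (X i : MvPolynomial (Fin n) k) = monomial (Finsupp.single i 1) 1 := by
    intro i; rw [← X_pow_eq_monomial, pow_one]
  -- the witness monomial
  have hw : (X (⟨1, h1⟩ : Fin n) ^ (t - 1) *
      ∏ j ∈ Finset.univ.filter (fun j : Fin n => 2 ≤ (j : ℕ)),
        (X j : MvPolynomial (Fin n) k) ^ t) = monomial c 1 := by
    rw [Finset.prod_congr rfl (fun j _ => X_pow_eq_monomial (n := j) (e := t)),
      aux_prod_monomial_one, X_pow_eq_monomial, monomial_mul, one_mul]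
    refine congrArg (fun s : Fin n →₀ ℕ => monomial s (1 : k)) ?_
    ext ⟨jv, hj⟩
    rw [Finsupp.add_apply, hcapp]
    simp only [Finsupp.single_apply, Finsupp.finset_sum_apply, Finset.sum_ite_eq,
      Finset.sum_ite_eq', Finset.mem_filter, Finset.mem_univ, true_and, Fin.mk.injEq]
    split_ifs <;> omega
  -- membership in J
  have hJeq : J = Ideal.span
      ((fun s => monomial s (1 : k)) '' {s : Fin n →₀ ℕ | ⇑s ∈ Delta n t}) := by
    rw [hJdef, aux_gens_eq]
  -- X0 * w ∈ J
  have hX0w : (X (⟨0, h0⟩ : Fin n) : MvPolynomial (Fin n) k) * monomial c 1 ∈ J := by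
    rw [hXmon, monomial_mul, one_mul, hJeq]
    apply Ideal.subset_span
    refine ⟨Finsupp.single (⟨0, h0⟩ : Fin n) 1 + c, ?_, rfl⟩
    have hb : ∀ i : Fin n, (Finsupp.single (⟨0, h0⟩ : Fin n) 1 + c : Fin n →₀ ℕ) i
        = if (i : ℕ) = 0 then 1 else if (i : ℕ) = 1 then t - 1 else t := by
      rintro ⟨iv, hi⟩
      rw [Finsupp.add_apply, hcapp]
      simp only [Finsupp.single_apply, Fin.mk.injEq]
      split_ifs <;> omega
    refine Or.inl ⟨?_, ?_⟩
    · intro i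
      rw [hb i]
      rcases i with ⟨iv, hi⟩
      split_ifs <;> omega
    · have hsum : ∑ i : Fin n,
          (fun j : ℕ => if j = 0 then 1 else if j = 1 then t - 1 else t) (i : ℕ)
          = ∑ j ∈ Finset.range n, (if j = 0 then 1 else if j = 1 then t - 1 else t) :=
        Fin.sum_univ_eq_sum_range (fun j : ℕ => if j = 0 then 1 else if j = 1 then t - 1 else t) n
      have hr : Finset.range n = insert 0 (insert 1 (Finset.Ico 2 n)) := by
        ext j; simp [Finset.mem_Ico]; omega
      calc ∑ i : Fin n, (Finsupp.single (⟨0, h0⟩ : Fin n) 1 + c : Fin n →₀ ℕ) i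
          = ∑ j ∈ Finset.range n, (if j = 0 then 1 else if j = 1 then t - 1 else t) := by
            rw [Finset.sum_congr rfl (fun i _ => hb i)]; exact hsum
        _ = 1 + ((t - 1) + ∑ j ∈ Finset.Ico 2 n,
              (if j = 0 then 1 else if j = 1 then t - 1 else t)) := by
            rw [hr, Finset.sum_insert (by simp [Finset.mem_Ico]),
              Finset.sum_insert (by simp [Finset.mem_Ico])]
            norm_num
        _ = 1 + ((t - 1) + (n - 2) * t) := by
            have hIco : ∀ j ∈ Finset.Ico 2 n,
                (if j = 0 then 1 else if j = 1 then t - 1 else t) = t := by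
              intro j hj
              rw [Finset.mem_Ico] at hj
              rw [if_neg (by omega), if_neg (by omega)]
            rw [Finset.sum_congr rfl hIco, Finset.sum_const, Nat.card_Ico, smul_eq_mul]
        _ = t * (n - 1) := by
            obtain ⟨t', rfl⟩ : ∃ t', t = t' + 2 := ⟨t - 2, by omega⟩
            obtain ⟨n', rfl⟩ : ∃ n', n = n' + 3 := ⟨n - 3, by omega⟩
            show 1 + ((t' + 1) + (n' + 1) * (t' + 2)) = (t' + 2) * (n' + 2)
            ring
  -- X1 * w ∈ J
  have hX1w : (X (⟨1, h1⟩ : Fin n) : MvPolynomial (Fin n) k) * monomial c 1 ∈ J := by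
    rw [hXmon, monomial_mul, one_mul, hJeq]
    apply Ideal.subset_span
    refine ⟨Finsupp.single (⟨1, h1⟩ : Fin n) 1 + c, ?_, rfl⟩
    refine Or.inr ⟨⟨0, h0⟩, ?_⟩
    funext i
    show (Finsupp.single (⟨1, h1⟩ : Fin n) 1 + c : Fin n →₀ ℕ) i = _
    rcases i with ⟨iv, hi⟩
    rw [Finsupp.add_apply, hcapp]
    simp only [Finsupp.single_apply, Fin.mk.injEq, Fin.ext_iff]
    split_ifs <;> omega
  -- the colon computation
  have himg : ({X (⟨0, h0⟩ : Fin n), X (⟨1, h1⟩ : Fin n)} : Set (MvPolynomial (Fin n) k))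
      = X '' {(⟨0, h0⟩ : Fin n), ⟨1, h1⟩} := (Set.image_pair _ _ _).symm
  have hcolon : J.colon (Ideal.span {monomial c (1 : k)})
      = Ideal.span {X (⟨0, h0⟩ : Fin n), (X (⟨1, h1⟩ : Fin n) : MvPolynomial (Fin n) k)} := by
    apply le_antisymm
    · intro f hf
      rw [Ideal.mem_colon_span_singleton, hJeq, mem_ideal_span_monomial_image] at hf
      rw [himg, mem_ideal_span_X_image]
      intro d hd
      have hdc : d + c ∈ (f * monomial c 1).support := by
        rw [mem_support_iff, coeff_mul_monomial, mul_one]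
        exact mem_support_iff.mp hd
      obtain ⟨s, hs, hsle⟩ := hf _ hdc
      rw [Set.mem_setOf_eq] at hs
      rcases hs with hs1 | ⟨i, hi⟩
      · refine ⟨⟨0, h0⟩, by simp, ?_⟩
        have ha := (hs1.1 ⟨0, h0⟩).1
        have hle := Finsupp.le_def.mp hsle ⟨0, h0⟩
        rw [Finsupp.add_apply, hcapp] at hle
        norm_num at hle
        omega
      · have hsi : ∀ j : Fin n, s j = if j = i then 0 else t := fun j => by rw [hi]
        by_cases hI : i = ⟨0, h0⟩
        · refine ⟨⟨1, h1⟩, by simp, ?_⟩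
          have hle := Finsupp.le_def.mp hsle ⟨1, h1⟩
          rw [Finsupp.add_apply, hcapp, hsi] at hle
          rw [hI] at hle
          rw [if_neg (by simp [Fin.ext_iff])] at hle
          norm_num at hle
          omega
        · refine ⟨⟨0, h0⟩, by simp, ?_⟩
          have hle := Finsupp.le_def.mp hsle ⟨0, h0⟩
          rw [Finsupp.add_apply, hcapp, hsi, if_neg (fun h => hI h.symm)] at hle
          norm_num at hle
          omega
    · rw [Ideal.span_le]
      rintro p (rfl | rfl)
      · exact Ideal.mem_colon_span_singleton.mpr hX0w
      · exact Ideal.mem_colon_span_singleton.mpr hX1w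
  -- primality of span {X0, X1}
  have hprime : (Ideal.span {X (⟨0, h0⟩ : Fin n),
      (X (⟨1, h1⟩ : Fin n) : MvPolynomial (Fin n) k)}).IsPrime := by
    set g : Fin n → MvPolynomial (Fin n) k := fun i => if (i : ℕ) ≤ 1 then 0 else X i with hg
    set π : MvPolynomial (Fin n) k →+* MvPolynomial (Fin n) k := (aeval g).toRingHom with hπ
    have hπC : ∀ a : k, π (C a) = C a := fun a => by simp [hπ]
    have hπX : ∀ i : Fin n, π (X i) = if (i : ℕ) ≤ 1 then 0 else X i := fun i => by
      simp [hπ, hg]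
    have hker : RingHom.ker π = Ideal.span {X (⟨0, h0⟩ : Fin n),
        (X (⟨1, h1⟩ : Fin n) : MvPolynomial (Fin n) k)} := by
      apply le_antisymm
      · intro p hp
        rw [RingHom.mem_ker] at hp
        have key : ∀ q : MvPolynomial (Fin n) k,
            q - π q ∈ Ideal.span {X (⟨0, h0⟩ : Fin n),
              (X (⟨1, h1⟩ : Fin n) : MvPolynomial (Fin n) k)} := by
          intro q
          induction q using MvPolynomial.induction_on with
          | C a => rw [hπC, sub_self]; exact zero_mem _
          | add p q hp hq =>
              have : p + q - π (p + q) = (p - π p) + (q - π q) := by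
                rw [map_add]; ring
              rw [this]; exact add_mem hp hq
          | mul_X p i hp =>
              have heq : p * X i - π (p * X i)
                  = (p - π p) * X i + π p * (X i - π (X i)) := by
                rw [map_mul]; ring
              rw [heq]
              refine add_mem (Ideal.mul_mem_right _ _ hp) ?_
              by_cases hi : (i : ℕ) ≤ 1
              · rw [hπX, if_pos hi, sub_zero]
                refine Ideal.mul_mem_left _ _ (Ideal.subset_span ?_)
                rcases Nat.lt_or_ge (i : ℕ) 1 with h | h
                · have hieq : i = ⟨0, h0⟩ := Fin.ext_iff.mpr (show (i : ℕ) = 0 by omega)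
                  rw [hieq]; exact Set.mem_insert _ _
                · have hieq : i = ⟨1, h1⟩ := Fin.ext_iff.mpr (show (i : ℕ) = 1 by omega)
                  rw [hieq]; exact Set.mem_insert_of_mem _ rfl
              · rw [hπX, if_neg hi, sub_self, mul_zero]; exact zero_mem _
        have := key p
        rwa [hp, sub_zero] at this
      · rw [Ideal.span_le]
        rintro p (rfl | rfl) <;>
          · rw [SetLike.mem_coe, RingHom.mem_ker, hπX]
            simp
    rw [← hker]
    exact RingHom.ker_isPrime π
  -- associated prime
  have hassoc : IsAssociatedPrime
      (Ideal.span {X (⟨0, h0⟩ : Fin n), (X (⟨1, h1⟩ : Fin n) : MvPolynomial (Fin n) k)})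
      (MvPolynomial (Fin n) k ⧸ J) := by
    refine ⟨hprime, Ideal.Quotient.mk J (monomial c 1), ?_⟩
    suffices hs : Ideal.span {X (⟨0, h0⟩ : Fin n), (X (⟨1, h1⟩ : Fin n) : MvPolynomial (Fin n) k)}
        = (⊥ : Submodule (MvPolynomial (Fin n) k) (MvPolynomial (Fin n) k ⧸ J)).colon
          {Ideal.Quotient.mk J (monomial c 1)} by
      rw [← hs, hprime.radical]
    ext r
    rw [Submodule.mem_colon_singleton, Submodule.mem_bot,
      show r • (Ideal.Quotient.mk J ((monomial c) 1))
          = Ideal.Quotient.mk J (r * (monomial c) 1) from rfl,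
      Ideal.Quotient.eq_zero_iff_mem, ← Ideal.mem_colon_span_singleton, hcolon]
  refine ⟨by rw [hw]; exact hcolon, hassoc, ?_⟩
  refine ⟨_, hassoc, lt_of_le_of_ne (Ideal.span_mono ?_) ?_⟩
  · intro x hx
    rcases hx with rfl | rfl
    · left; rfl
    · right; left; rfl
  · intro hEq
    have hX2mem : (X (⟨2, h2⟩ : Fin n) : MvPolynomial (Fin n) k)
        ∈ Ideal.span {X (⟨0, h0⟩ : Fin n), (X (⟨1, h1⟩ : Fin n) : MvPolynomial (Fin n) k)} := by
      rw [hEq]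
      exact Ideal.subset_span (by right; right; rfl)
    rw [himg, mem_ideal_span_X_image] at hX2mem
    obtain ⟨i, hi, hne0⟩ := hX2mem (Finsupp.single (⟨2, h2⟩ : Fin n) 1) (by
      rw [support_X]; simp)
    rw [Finsupp.single_apply] at hne0
    rcases hi with rfl | rfl
    · rw [if_neg (by simp [Fin.ext_iff])] at hne0; exact hne0 rfl
    · rw [if_neg (by simp [Fin.ext_iff])] at hne0; exact hne0 rfl
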